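/- arXiv:1804.10057 — 7 statements merged into one kernel-verified Lean document; each statement's English description precedes it below -/
import Mathlib

section
/- The composite of two idempotent full contractions of [n] need not be idempotent when n ≥ 4: there exist idempotents ε, τ in CT_4 such that ετ is not idempotent. Concretely, ε defined by 1ε=1, 2ε=3ε=4ε=2 and τ defined by 1τ=3τ=3, 2τ=4τ=2 are idempotent contractions of {1,2,3,4}, but ετ is not idempotent. -/
/-- A full transformation of the chain `Fin n` is a contraction if it does not
increase distances. -/
def IsContraction {n : ℕ} (α : Fin n → Fin n) : Prop :=
  ∀ x y : Fin n, |(α x : ℤ) - (α y : ℤ)| ≤ |(x : ℤ) - (y : ℤ)|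

/-- The product of two idempotent full contractions of `{1,2,3,4}` need not be
idempotent. Here `Fin 4 = {0,1,2,3}` represents `{1,2,3,4}`: `ε` sends `1 ↦ 1`,
`2,3,4 ↦ 2` and `τ` sends `1,3 ↦ 3`, `2,4 ↦ 2`; the product `ετ` is `τ ∘ ε`. -/
theorem product_of_idempotent_contractions_not_idempotent :
    ∃ ε τ : Fin 4 → Fin 4,
      ε = ![0, 1, 1, 1] ∧ τ = ![2, 1, 2, 1] ∧
      IsContraction ε ∧ IsContraction τ ∧
      ε ∘ ε = ε ∧ τ ∘ τ = τ ∧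
      ¬ ((τ ∘ ε) ∘ (τ ∘ ε) = τ ∘ ε) := by
  refine ⟨![0, 1, 1, 1], ![2, 1, 2, 1], rfl, rfl, ?_, ?_, ?_, ?_, ?_⟩
  · intro x y; fin_cases x <;> fin_cases y <;> decide
  · intro x y; fin_cases x <;> fin_cases y <;> decide
  · funext x; fin_cases x <;> rfl
  · funext x; fin_cases x <;> rfl
  · intro h
    have := congrFun h 0
    simp at this
end

section
/- A full contraction α of [n] is a regular element of the semigroup CT_n (i.e., there exists a full contraction β with α = αβα) if and only if the kernel partition of α admits a convex transversal, that is, a convex subset T of [n] meeting each kernel class of α in exactly one point. -/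
lemma contr4 {n : ℕ} {α : Fin n → Fin n} (hα : IsContraction α) (x y : Fin n)
    (h : x.val ≤ y.val) :
    (α y : ℤ) - (α x : ℤ) ≤ (y : ℤ) - (x : ℤ) ∧ (x : ℤ) - (y : ℤ) ≤ (α y : ℤ) - (α x : ℤ) := by
  have h1 := hα y x
  rw [abs_of_nonneg (show (0:ℤ) ≤ (y : ℤ) - (x : ℤ) by omega), abs_le] at h1
  exact ⟨h1.2, by omega⟩


lemma ivt (g : ℕ → ℤ) (h : ∀ k, |g (k+1) - g k| ≤ 1) :
    ∀ (m : ℕ) (c : ℤ), g 0 ≤ c → c ≤ g m → ∃ k, k ≤ m ∧ g k = c := by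
  intro m
  induction m with
  | zero => exact fun c h1 h2 => ⟨0, le_refl 0, le_antisymm h1 h2⟩
  | succ m ih =>
    intro c h1 h2
    rcases le_or_gt c (g m) with h3 | h3
    · obtain ⟨k, hk, hg⟩ := ih c h1 h3
      exact ⟨k, Nat.le_succ_of_le hk, hg⟩
    · have h4 := h m
      rw [abs_le] at h4
      exact ⟨m+1, le_refl _, by omega⟩


lemma range_convex {n : ℕ} {f : Fin n → Fin n} (hf : IsContraction f) :
    ∀ a ∈ Set.range f, ∀ b ∈ Set.range f, ∀ c : Fin n, a ≤ c → c ≤ b → c ∈ Set.range f := by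
  rintro a ⟨u, rfl⟩ b ⟨v, rfl⟩ c hac hcb
  rw [Fin.le_def] at hac hcb
  rcases le_total u.val v.val with huv | huv
  · have hlt : ∀ k : ℕ, min (u.val + k) v.val < n :=
      fun k => lt_of_le_of_lt (min_le_right _ _) v.isLt
    set g : ℕ → ℤ := fun k => ((f ⟨min (u.val + k) v.val, hlt k⟩ : ℤ)) with hg
    have hlip : ∀ k, |g (k+1) - g k| ≤ 1 := by
      intro k
      have h5 := contr4 hf ⟨min (u.val + k) v.val, hlt k⟩ ⟨min (u.val + (k+1)) v.val, hlt (k+1)⟩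
        (by simp only [Fin.val_mk]; omega)
      simp only [Fin.val_mk] at h5
      simp only [hg, abs_le]
      constructor <;> omega
    have e0 : (⟨min (u.val + 0) v.val, hlt 0⟩ : Fin n) = u :=
      Fin.ext (by simp only [Fin.val_mk]; omega)
    have em : (⟨min (u.val + (v.val - u.val)) v.val, hlt (v.val - u.val)⟩ : Fin n) = v :=
      Fin.ext (by simp only [Fin.val_mk]; omega)
    have hg0 : g 0 = (f u : ℤ) := by simp only [hg, e0]
    have hgm : g (v.val - u.val) = (f v : ℤ) := by simp only [hg, em]
    obtain ⟨k, hk, hgk⟩ := ivt g hlip (v.val - u.val) (c : ℤ) (by omega) (by omega)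
    refine ⟨⟨min (u.val + k) v.val, hlt k⟩, Fin.ext ?_⟩
    simp only [hg] at hgk
    omega
  · have hlt : ∀ k : ℕ, min (v.val + k) u.val < n :=
      fun k => lt_of_le_of_lt (min_le_right _ _) u.isLt
    set g : ℕ → ℤ := fun k => -((f ⟨min (v.val + k) u.val, hlt k⟩ : ℤ)) with hg
    have hlip : ∀ k, |g (k+1) - g k| ≤ 1 := by
      intro k
      have h5 := contr4 hf ⟨min (v.val + k) u.val, hlt k⟩ ⟨min (v.val + (k+1)) u.val, hlt (k+1)⟩
        (by simp only [Fin.val_mk]; omega)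
      simp only [Fin.val_mk] at h5
      simp only [hg, abs_le]
      constructor <;> omega
    have e0 : (⟨min (v.val + 0) u.val, hlt 0⟩ : Fin n) = v :=
      Fin.ext (by simp only [Fin.val_mk]; omega)
    have em : (⟨min (v.val + (u.val - v.val)) u.val, hlt (u.val - v.val)⟩ : Fin n) = u :=
      Fin.ext (by simp only [Fin.val_mk]; omega)
    have hg0 : g 0 = -(f v : ℤ) := by simp only [hg, e0]
    have hgm : g (u.val - v.val) = -(f u : ℤ) := by simp only [hg, em]
    obtain ⟨k, hk, hgk⟩ := ivt g hlip (u.val - v.val) (-(c : ℤ)) (by omega) (by omega)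
    refine ⟨⟨min (v.val + k) u.val, hlt k⟩, Fin.ext ?_⟩
    simp only [hg] at hgk
    omega

lemma key_expand {n : ℕ} {α : Fin n → Fin n} (hα : IsContraction α) {T : Set (Fin n)}
    (hconv : ∀ a ∈ T, ∀ b ∈ T, ∀ c : Fin n, a ≤ c → c ≤ b → c ∈ T)
    (hinj : ∀ t ∈ T, ∀ t' ∈ T, α t = α t' → t = t') :
    ∀ t ∈ T, ∀ t' ∈ T, |(t : ℤ) - (t' : ℤ)| ≤ |(α t : ℤ) - (α t' : ℤ)| := by
  have hne : ∀ p ∈ T, ∀ q ∈ T, p.val ≠ q.val → ((α p : ℤ)) ≠ (α q : ℤ) := by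
    intro p hp q hq hpq hc
    exact hpq (congrArg Fin.val (hinj p hp q hq (Fin.ext (by exact_mod_cast hc))))
  have P : ∀ k : ℕ, ∀ t ∈ T, ∀ t' ∈ T, t'.val = t.val + k →
      (α t' : ℤ) - (α t : ℤ) = (k : ℤ) ∨ (α t' : ℤ) - (α t : ℤ) = -(k : ℤ) := by
    intro k
    induction k using Nat.strong_induction_on with
    | _ k ih =>
    intro t ht t' ht' hk
    obtain _ | k := k
    · left
      have : t' = t := Fin.ext (by omega)
      rw [this]; simp
    obtain _ | k := k
    · have hb := contr4 hα t t' (by omega)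
      have hne1 := hne t' ht' t ht (by omega)
      omega
    · have hlt := t'.isLt
      obtain ⟨u, huv⟩ : ∃ u : Fin n, u.val = t.val + (k+1) := ⟨⟨t.val + (k+1), by omega⟩, rfl⟩
      obtain ⟨w, hwv⟩ : ∃ w : Fin n, w.val = t.val + k := ⟨⟨t.val + k, by omega⟩, rfl⟩
      have huT : u ∈ T := hconv t ht t' ht' u (by rw [Fin.le_def]; omega) (by rw [Fin.le_def]; omega)
      have hwT : w ∈ T := hconv t ht t' ht' w (by rw [Fin.le_def]; omega) (by rw [Fin.le_def]; omega)
      have e1 := ih (k+1) (by omega) t ht u huT (by omega)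
      have e2 := ih k (by omega) t ht w hwT (by omega)
      have d1 := contr4 hα u t' (by omega)
      have dne1 := hne t' ht' u huT (by omega)
      have d2 := contr4 hα w t' (by omega)
      have dne2 := hne t' ht' w hwT (by omega)
      have d3 := contr4 hα w u (by omega)
      rcases e1 with e1 | e1 <;> rcases e2 with e2 | e2 <;> omega
  intro t ht t' ht'
  rcases le_total t.val t'.val with h | h
  · rcases P (t'.val - t.val) t ht t' ht' (by omega) with h1 | h1 <;>
    · have h4 : |(t : ℤ) - (t' : ℤ)| ≤ ((t'.val - t.val : ℕ) : ℤ) := by rw [abs_le]; omega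
      refine h4.trans (le_abs.mpr ?_)
      omega
  · rcases P (t.val - t'.val) t' ht' t ht (by omega) with h1 | h1 <;>
    · have h4 : |(t : ℤ) - (t' : ℤ)| ≤ ((t.val - t'.val : ℕ) : ℤ) := by rw [abs_le]; omega
      refine h4.trans (le_abs.mpr ?_)
      omega

/-- A full contraction `α` is regular in `CT_n` (there is a contraction `β` with
`α = αβα`, reading products left-to-right, i.e. `α ∘ β ∘ α` as functions) iff the
kernel partition of `α` has a convex transversal: a convex set `T` meeting each
kernel class in exactly one point. -/
theorem regular_iff_convex_transversal {n : ℕ} (α : Fin n → Fin n)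
    (hα : IsContraction α) :
    (∃ β : Fin n → Fin n, IsContraction β ∧ α ∘ β ∘ α = α) ↔
    ∃ T : Set (Fin n),
      (∀ a ∈ T, ∀ b ∈ T, ∀ c : Fin n, a ≤ c → c ≤ b → c ∈ T) ∧
      (∀ x : Fin n, ∃! t : Fin n, t ∈ T ∧ α t = α x) := by
  constructor
  · rintro ⟨β, hβ, hcomp⟩
    have hco : IsContraction (β ∘ α) := fun x y => le_trans (hβ _ _) (hα x y)
    have hfix : ∀ z, α (β (α z)) = α z := fun z => congrFun hcomp z
    refine ⟨Set.range (β ∘ α), range_convex hco, ?_⟩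
    intro x
    refine ⟨β (α x), ⟨⟨x, rfl⟩, hfix x⟩, ?_⟩
    rintro y ⟨⟨u, rfl⟩, hy⟩
    show β (α u) = β (α x)
    rw [show α u = α x from ((hfix u).symm.trans hy)]
  · rintro ⟨T, hconv, htrans⟩
    rcases Nat.eq_zero_or_pos n with hn | hn
    · subst hn
      exact ⟨id, fun x _ => x.elim0, funext fun x => x.elim0⟩
    have hnem : Nonempty (Fin n) := ⟨⟨0, hn⟩⟩
    choose τ hτ using htrans
    have hτT : ∀ x, τ x ∈ T := fun x => (hτ x).1.1
    have hτα : ∀ x, α (τ x) = α x := fun x => (hτ x).1.2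
    have hinjT : ∀ t ∈ T, ∀ t' ∈ T, α t = α t' → t = t' := by
      intro t ht t' ht' he
      exact ((hτ t').2 t ⟨ht, he⟩).trans ((hτ t').2 t' ⟨ht', rfl⟩).symm
    obtain ⟨x₁, hx₁⟩ := Finite.exists_min α
    obtain ⟨x₂, hx₂⟩ := Finite.exists_max α
    set cl : Fin n → Fin n := fun y => if y ≤ α x₁ then α x₁ else if α x₂ ≤ y then α x₂ else y
      with hcl
    have hclmem : ∀ y, ∃ x, α x = cl y := by
      intro y
      simp only [hcl]
      split_ifs with h1 h2
      · exact ⟨x₁, rfl⟩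
      · exact ⟨x₂, rfl⟩
      · exact range_convex hα (α x₁) ⟨x₁, rfl⟩ (α x₂) ⟨x₂, rfl⟩ y
          (le_of_not_ge h1) (le_of_not_ge h2)
    have hcllip : ∀ y y' : Fin n, |(cl y : ℤ) - (cl y' : ℤ)| ≤ |(y : ℤ) - (y' : ℤ)| := by
      intro y y'
      have hy := le_abs_self ((y : ℤ) - (y' : ℤ))
      have hy' := neg_abs_le ((y : ℤ) - (y' : ℤ))
      have h12 : (α x₁).val ≤ (α x₂).val := hx₁ x₂
      rw [abs_le]
      simp only [hcl]
      split_ifs <;>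
        first
          | omega
          | (simp only [Fin.le_def, not_le] at *; omega)
    have hclfix : ∀ x, cl (α x) = α x := by
      intro x
      simp only [hcl]
      split_ifs with h1 h2
      · exact le_antisymm (hx₁ x) h1
      · exact le_antisymm h2 (hx₂ x)
      · rfl
    choose pre hpre using hclmem
    refine ⟨fun y => τ (pre y), ?_, ?_⟩
    · intro y y'
      have h1 := key_expand hα hconv hinjT (τ (pre y)) (hτT _) (τ (pre y')) (hτT _)
      rw [hτα, hτα, hpre, hpre] at h1
      exact h1.trans (hcllip y y')
    · funext x
      show α (τ (pre (α x))) = α x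
      rw [hτα, hpre, hclfix]
end

section
/- Two full contractions α, β of [n] are R-related in the semigroup CT_n (i.e., generate the same principal right ideal: α CT_n^1 = β CT_n^1) if and only if ker α = ker β, where ker α = {(x,y) : xα = yα}. -/
namespace GreenAux

/-- Adjacent step: if value `t` is attainable below `x` and `t+1` at `y`,
then `t` and `t+1` are attained at points at distance at most 1. -/
lemma step {n : ℕ} {β : Fin n → Fin n} (hβ : IsContraction β) (t : ℕ) :
    ∀ d : ℕ, ∀ x y : Fin n, Nat.dist x y ≤ d → (β x : ℕ) ≤ t → t + 1 ≤ (β y : ℕ) →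
    ∃ p q : Fin n, (β p : ℕ) = t ∧ (β q : ℕ) = t + 1 ∧ |(p : ℤ) - (q : ℤ)| ≤ 1 := by
  intro d
  induction d with
  | zero =>
    intro x y hd hx hy
    have hxy : (x:ℕ) = (y:ℕ) := by simp [Nat.dist] at hd; omega
    have : x = y := Fin.ext hxy
    subst this; omega
  | succ d ih =>
    intro x y hd hx hy
    have hne : (x:ℕ) ≠ (y:ℕ) := by
      intro h; have : x = y := Fin.ext h; subst this; omega
    by_cases hxy : (x:ℕ) < (y:ℕ)
    · have hlt : (x:ℕ) + 1 < n := by have := y.isLt; omega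
      set x' : Fin n := ⟨(x:ℕ)+1, hlt⟩ with hx'
      have h1 : ((x':ℕ):ℤ) = ((x:ℕ):ℤ) + 1 := by simp [hx']
      have hd1 : (x:ℤ) - (x':ℤ) = -1 := by
        show ((x:ℕ):ℤ) - ((x':ℕ):ℤ) = -1
        omega
      have habs : |(x:ℤ) - (x':ℤ)| = 1 := by rw [hd1]; norm_num
      have hb := hβ x x'
      rw [habs, abs_le] at hb
      by_cases hc : t + 1 ≤ (β x' : ℕ)
      · exact ⟨x, x', by omega, by omega, habs.le⟩
      · refine ih x' y ?_ (by omega) hy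
        simp [hx', Nat.dist] at hd ⊢
        omega
    · have hgt : (y:ℕ) < (x:ℕ) := by omega
      have hlt : (x:ℕ) - 1 < n := by have := x.isLt; omega
      set x' : Fin n := ⟨(x:ℕ)-1, hlt⟩ with hx'
      have h1 : ((x':ℕ):ℤ) = ((x:ℕ):ℤ) - 1 := by simp [hx']; omega
      have hd1 : (x:ℤ) - (x':ℤ) = 1 := by
        show ((x:ℕ):ℤ) - ((x':ℕ):ℤ) = 1
        omega
      have habs : |(x:ℤ) - (x':ℤ)| = 1 := by rw [hd1]; norm_num
      have hb := hβ x x'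
      rw [habs, abs_le] at hb
      by_cases hc : t + 1 ≤ (β x' : ℕ)
      · exact ⟨x, x', by omega, by omega, habs.le⟩
      · refine ih x' y ?_ (by omega) hy
        simp [hx', Nat.dist] at hd ⊢
        omega

/-- Discrete intermediate value theorem for contractions. -/
lemma ivt {n : ℕ} {β : Fin n → Fin n} (hβ : IsContraction β) {x y : Fin n} {v : ℕ}
    (h1 : (β x : ℕ) ≤ v) (h2 : v ≤ (β y : ℕ)) : ∃ p : Fin n, (β p : ℕ) = v := by
  rcases eq_or_lt_of_le h2 with h | h
  · exact ⟨y, h.symm⟩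
  · obtain ⟨p, q, hp, _, _⟩ := step hβ v (Nat.dist x y) x y le_rfl h1 h
    exact ⟨p, hp⟩

lemma lip {n : ℕ} {α β : Fin n → Fin n} (hα : IsContraction α) (hβ : IsContraction β)
    (hker : ∀ x y : Fin n, β x = β y → α x = α y) :
    ∀ k : ℕ, ∀ x y : Fin n, (β y : ℕ) = (β x : ℕ) + k → |(α x : ℤ) - (α y : ℤ)| ≤ (k : ℤ) := by
  intro k
  induction k with
  | zero =>
    intro x y h
    have hb : β x = β y := Fin.ext (by omega)
    rw [hker x y hb]
    simp
  | succ k ih =>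
    intro x y h
    obtain ⟨p, q, hp, hq, hpq⟩ :=
      step hβ ((β x : ℕ) + k) (Nat.dist x y) x y le_rfl (by omega) (by omega)
    have h1 := ih x p (by omega)
    have h2 : α q = α y := hker q y (Fin.ext (by omega))
    have h3 : |(α p : ℤ) - (α q : ℤ)| ≤ 1 := le_trans (hα p q) hpq
    rw [← h2]
    calc |(α x : ℤ) - (α q : ℤ)| ≤ |(α x : ℤ) - (α p : ℤ)| + |(α p : ℤ) - (α q : ℤ)| :=
          abs_sub_le _ _ _
      _ ≤ ((k + 1 : ℕ) : ℤ) := by push_cast; linarith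

/-- Key: kernel-refining contractions are Lipschitz with respect to each other's images. -/
lemma key {n : ℕ} {α β : Fin n → Fin n} (hα : IsContraction α) (hβ : IsContraction β)
    (hker : ∀ x y : Fin n, β x = β y → α x = α y) (x y : Fin n) :
    |(α x : ℤ) - (α y : ℤ)| ≤ |(β x : ℤ) - (β y : ℤ)| := by
  rcases le_total (β x : ℕ) (β y : ℕ) with h | h
  · have hl := lip hα hβ hker ((β y : ℕ) - (β x : ℕ)) x y (by omega)
    have e : |(β x : ℤ) - (β y : ℤ)| = (((β y : ℕ) - (β x : ℕ) : ℕ) : ℤ) := by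
      rw [abs_sub_comm, abs_of_nonneg (by show (0:ℤ) ≤ ((β y:ℕ):ℤ) - ((β x:ℕ):ℤ); omega)]
      show ((β y:ℕ):ℤ) - ((β x:ℕ):ℤ) = _
      omega
    rw [e]; exact hl
  · have hl := lip hα hβ hker ((β x : ℕ) - (β y : ℕ)) y x (by omega)
    have e : |(β x : ℤ) - (β y : ℤ)| = (((β x : ℕ) - (β y : ℕ) : ℕ) : ℤ) := by
      rw [abs_of_nonneg (by show (0:ℤ) ≤ ((β x:ℕ):ℤ) - ((β y:ℕ):ℤ); omega)]
      show ((β x:ℕ):ℤ) - ((β y:ℕ):ℤ) = _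
      omega
    rw [e, abs_sub_comm]; exact hl

/-- Factorization: if `ker β ⊆ ker α` then `α = u ∘ β` for some contraction `u`. -/
lemma factor {n : ℕ} {α β : Fin n → Fin n} (hα : IsContraction α) (hβ : IsContraction β)
    (hker : ∀ x y : Fin n, β x = β y → α x = α y) :
    ∃ u : Fin n → Fin n, IsContraction u ∧ α = u ∘ β := by
  rcases Nat.eq_zero_or_pos n with hn | hn
  · subst hn
    exact ⟨id, fun x y => le_refl _, funext fun x => x.elim0⟩
  haveI : Nonempty (Fin n) := Fin.pos_iff_nonempty.mp hn
  obtain ⟨xm, -, hm⟩ := Finset.exists_min_image Finset.univ (fun i => (β i : ℕ))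
    Finset.univ_nonempty
  obtain ⟨xM, -, hM⟩ := Finset.exists_max_image Finset.univ (fun i => (β i : ℕ))
    Finset.univ_nonempty
  simp only [Finset.mem_univ, forall_const] at hm hM
  have hmM : (β xm : ℕ) ≤ (β xM : ℕ) := hm xM
  have hex : ∀ t : Fin n, ∃ p : Fin n,
      (β p : ℕ) = max (β xm : ℕ) (min (t : ℕ) (β xM : ℕ)) := by
    intro t
    exact ivt hβ (x := xm) (y := xM) (le_max_left _ _) (by omega)
  set u : Fin n → Fin n := fun t => α (Classical.choose (hex t)) with hu
  refine ⟨u, ?_, ?_⟩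
  · intro t s
    have hp := Classical.choose_spec (hex t)
    have hq := Classical.choose_spec (hex s)
    refine le_trans (key hα hβ hker _ _) ?_
    have hD1 := le_abs_self ((t : ℤ) - (s : ℤ))
    have hD2 := neg_abs_le ((t : ℤ) - (s : ℤ))
    rw [abs_sub_le_iff]
    constructor
    · show ((β _ : ℕ) : ℤ) - ((β _ : ℕ) : ℤ) ≤ _
      omega
    · show ((β _ : ℕ) : ℤ) - ((β _ : ℕ) : ℤ) ≤ _
      omega
  · funext x
    have hp := Classical.choose_spec (hex (β x))
    have hb : (β (Classical.choose (hex (β x))) : ℕ) = (β x : ℕ) := by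
      rw [hp]
      have h1 := hm x
      have h2 := hM x
      omega
    exact (hker _ x (Fin.ext hb)).symm

end GreenAux

/-- Green's `R` relation on the semigroup `CT_n` of full contractions: `α R β`
(i.e. `α ∈ β·CT_n¹` and `β ∈ α·CT_n¹`, where the product `βu` is `u ∘ β` as
functions) holds iff `ker α = ker β`. -/
theorem green_R_iff_ker_eq {n : ℕ} (α β : Fin n → Fin n)
    (hα : IsContraction α) (hβ : IsContraction β) :
    ((α = β ∨ ∃ u : Fin n → Fin n, IsContraction u ∧ α = u ∘ β) ∧
     (β = α ∨ ∃ v : Fin n → Fin n, IsContraction v ∧ β = v ∘ α)) ↔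
    (∀ x y : Fin n, α x = α y ↔ β x = β y) := by
  constructor
  · rintro ⟨h1, h2⟩ x y
    constructor
    · intro h
      rcases h2 with h2 | ⟨v, -, h2⟩
      · rw [h2]; exact h
      · rw [h2]; simp only [Function.comp_apply, h]
    · intro h
      rcases h1 with h1 | ⟨u, -, h1⟩
      · rw [h1]; exact h
      · rw [h1]; simp only [Function.comp_apply, h]
  · intro h
    constructor
    · exact Or.inr (GreenAux.factor hα hβ (fun x y hb => (h x y).mpr hb))
    · exact Or.inr (GreenAux.factor hβ hα (fun x y hb => (h x y).mp hb))
end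

section
/- For every full contraction α of [n], there exists an idempotent full contraction γ of [n] with im γ = im α. Consequently, every L*-class of the semigroup CT_n contains an idempotent, i.e., CT_n is left abundant. -/
lemma abs_fin_cast {n : ℕ} (a b : Fin n) :
    |((a : ℤ)) - ((b : ℤ))| = ((max a.val b.val - min a.val b.val : ℕ) : ℤ) := by
  rcases le_total a.val b.val with h | h
  · rw [abs_of_nonpos (by omega)]; omega
  · rw [abs_of_nonneg (by omega)]; omega

/-- Discrete intermediate value theorem along a path of steps of size ≤ 1. -/
lemma ivt_s9 {n : ℕ} (α : Fin n → Fin n)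
    (hstep : ∀ i j : Fin n, j.val = i.val + 1 →
      (α j).val ≤ (α i).val + 1 ∧ (α i).val ≤ (α j).val + 1) :
    ∀ (m : ℕ) (i j : Fin n), j.val = i.val + m → ∀ c : Fin n,
      ((α i).val ≤ c.val ∧ c.val ≤ (α j).val) ∨
      ((α j).val ≤ c.val ∧ c.val ≤ (α i).val) →
      ∃ k, α k = c := by
  intro m
  induction m with
  | zero =>
    intro i j hij c hc
    have hij' : i = j := Fin.ext (by omega)
    subst hij'
    exact ⟨i, Fin.ext (by omega)⟩
  | succ m ih =>
    intro i j hij c hc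
    have h1 : i.val + 1 < n := by have := j.isLt; omega
    have i' : Fin n := ⟨i.val + 1, h1⟩
    have hs := hstep i ⟨i.val + 1, h1⟩ (by simp only [Fin.val_mk])
    by_cases hc0 : c.val = (α i).val
    · exact ⟨i, Fin.ext hc0.symm⟩
    · apply ih ⟨i.val + 1, h1⟩ j (by simp only [Fin.val_mk]; omega) c
      omega

/-- Every full contraction has an idempotent full contraction with the same image;
hence every `L*`-class of `CT_n` (characterized by equality of images) contains an
idempotent, i.e. `CT_n` is left abundant. -/
theorem left_abundant {n : ℕ} (α : Fin n → Fin n) (hα : IsContraction α) :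
    ∃ γ : Fin n → Fin n, IsContraction γ ∧ γ ∘ γ = γ ∧
      Set.range γ = Set.range α := by
  rcases Nat.eq_zero_or_pos n with hn | hn
  · subst hn
    exact ⟨α, hα, funext fun x => x.elim0, rfl⟩
  · have hne : (Finset.image α Finset.univ).Nonempty := by
      refine ⟨α ⟨0, hn⟩, ?_⟩
      exact Finset.mem_image_of_mem α (Finset.mem_univ _)
    set S := Finset.image α Finset.univ with hS
    obtain ⟨i0, _, ha⟩ := Finset.mem_image.mp (S.min'_mem hne)
    obtain ⟨i1, _, hb⟩ := Finset.mem_image.mp (S.max'_mem hne)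
    set a := S.min' hne with haS
    set b := S.max' hne with hbS
    have hbnds : ∀ x : Fin n, a.val ≤ (α x).val ∧ (α x).val ≤ b.val := by
      intro x
      have hm : α x ∈ S := Finset.mem_image_of_mem α (Finset.mem_univ _)
      exact ⟨S.min'_le _ hm, S.le_max' _ hm⟩
    have hab : a.val ≤ b.val := by
      have := hbnds i0; rw [ha] at this; omega
    refine ⟨fun x => ⟨min b.val (max a.val x.val),
        lt_of_le_of_lt (min_le_left _ _) b.isLt⟩, ?_, ?_, ?_⟩
    · -- contraction
      intro x y
      rw [abs_fin_cast, abs_fin_cast]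
      simp only [Fin.val_mk]
      omega
    · -- idempotent
      funext x
      apply Fin.ext
      simp only [Function.comp_apply, Fin.val_mk]
      omega
    · -- same range
      have hstep : ∀ i j : Fin n, j.val = i.val + 1 →
          (α j).val ≤ (α i).val + 1 ∧ (α i).val ≤ (α j).val + 1 := by
        intro i j hij
        have := hα j i
        rw [abs_fin_cast, abs_fin_cast] at this
        omega
      apply Set.eq_of_subset_of_subset
      · rintro _ ⟨x, rfl⟩
        set c : Fin n := ⟨min b.val (max a.val x.val),
          lt_of_le_of_lt (min_le_left _ _) b.isLt⟩ with hc
        have hcv : a.val ≤ c.val ∧ c.val ≤ b.val := by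
          simp only [hc, Fin.val_mk]; omega
        rcases le_total i0.val i1.val with hord | hord
        · obtain ⟨k, hk⟩ := ivt_s9 α hstep (i1.val - i0.val) i0 i1 (by omega) c
            (Or.inl ⟨by rw [ha]; exact hcv.1, by rw [hb]; exact hcv.2⟩)
          exact ⟨k, hk⟩
        · obtain ⟨k, hk⟩ := ivt_s9 α hstep (i0.val - i1.val) i1 i0 (by omega) c
            (Or.inr ⟨by rw [ha]; exact hcv.1, by rw [hb]; exact hcv.2⟩)
          exact ⟨k, hk⟩
      · rintro _ ⟨x, rfl⟩
        refine ⟨α x, Fin.ext ?_⟩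
        have := hbnds x
        simp only [Fin.val_mk]
        omega
end

section
/- The product of any two idempotents in the semigroup ORCT_n of order-preserving or order-reversing full contractions of [n] is again an idempotent; hence the idempotents of ORCT_n form a subsemigroup (a band), so the regular part of ORCT_n is orthodox. -/
/-- Membership in `ORCT_n`: a full contraction that is order preserving or
order reversing. -/
def InORCT {n : ℕ} (α : Fin n → Fin n) : Prop :=
  IsContraction α ∧ (Monotone α ∨ Antitone α)

/-- The product of two idempotents of `ORCT_n` is again an idempotent of
`ORCT_n` (so the idempotents form a band and the regular part is orthodox).
The product `ετ` (apply `ε` then `τ`) is `τ ∘ ε` as functions. -/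
theorem product_of_idempotents_ORCT {n : ℕ} (ε τ : Fin n → Fin n)
    (hε : InORCT ε) (hεid : ε ∘ ε = ε)
    (hτ : InORCT τ) (hτid : τ ∘ τ = τ) :
    InORCT (τ ∘ ε) ∧ (τ ∘ ε) ∘ (τ ∘ ε) = τ ∘ ε := by
  obtain ⟨hεc, hεm⟩ := hε
  obtain ⟨hτc, hτm⟩ := hτ
  -- any idempotent in ORCT is in fact monotone
  have hεmono : Monotone ε := by
    rcases hεm with h | h
    · exact h
    · have h2 : Monotone (ε ∘ ε) := h.comp h
      rwa [hεid] at h2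
  have hτmono : Monotone τ := by
    rcases hτm with h | h
    · exact h
    · have h2 : Monotone (τ ∘ τ) := h.comp h
      rwa [hτid] at h2
  have hεfix : ∀ z, ε (ε z) = ε z := fun z => congrFun hεid z
  have hτfix : ∀ z, τ (τ z) = τ z := fun z => congrFun hτid z
  refine ⟨⟨?_, Or.inl (hτmono.comp hεmono)⟩, ?_⟩
  · intro x y
    exact le_trans (hτc (ε x) (ε y)) (hεc x y)
  · funext x
    show τ (ε (τ (ε x))) = τ (ε x)
    set u := ε x with hu
    set v := τ u with hv
    have hεu : ε u = u := hεfix x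
    have hτv : τ v = v := hτfix u
    rcases lt_trichotomy v u with h | h | h
    · -- v < u : then v ≤ ε v ≤ u, apply τ and squeeze
      have h1 : ε v ≤ u := by
        have := hεmono h.le
        rwa [hεu] at this
      have h2 : v ≤ ε v := by
        have hc := hεc v u
        rw [hεu] at hc
        have hvu : (v : ℤ) < (u : ℤ) := by exact_mod_cast h
        have h1' : ((ε v : Fin n) : ℤ) ≤ (u : ℤ) := by exact_mod_cast h1
        have : (v : ℤ) ≤ ((ε v : Fin n) : ℤ) := by
          rcases abs_le.mp hc with ⟨hl, _⟩
          rw [abs_of_nonpos (by omega)] at hl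
          omega
        exact_mod_cast this
      have hle : τ (ε v) ≤ v := by
        have := hτmono h1
        rwa [← hv] at this
      have hge : v ≤ τ (ε v) := by
        have := hτmono h2
        rwa [hτv] at this
      exact le_antisymm hle hge
    · rw [h, hεu, ← h, hτv]
    · -- u < v : symmetric
      have h1 : u ≤ ε v := by
        have := hεmono h.le
        rwa [hεu] at this
      have h2 : ε v ≤ v := by
        have hc := hεc v u
        rw [hεu] at hc
        have hvu : (u : ℤ) < (v : ℤ) := by exact_mod_cast h
        have h1' : (u : ℤ) ≤ ((ε v : Fin n) : ℤ) := by exact_mod_cast h1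
        have : ((ε v : Fin n) : ℤ) ≤ (v : ℤ) := by
          rcases abs_le.mp hc with ⟨_, hr⟩
          rw [abs_of_nonneg (by omega)] at hr
          omega
        exact_mod_cast this
      have hge : v ≤ τ (ε v) := by
        have := hτmono h1
        rwa [← hv] at this
      have hle : τ (ε v) ≤ v := by
        have := hτmono h2
        rwa [hτv] at this
      exact le_antisymm hle hge
end

section
/- In the regular part of the semigroup ORCT_n of order-preserving or order-reversing full contractions of [n], every L-class contains exactly one idempotent (Reg(ORCT_n) is L-unipotent): if two idempotents ε, ε' of Reg(ORCT_n) are L-related (generate the same principal left ideal), then ε = ε'. -/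
/-- Membership in `Reg(ORCT_n)`: a regular element of `ORCT_n`
(products read left-to-right: `αβα = α ∘ β ∘ α`). -/
def InRegORCT {n : ℕ} (α : Fin n → Fin n) : Prop :=
  InORCT α ∧ ∃ β : Fin n → Fin n, InORCT β ∧ α ∘ β ∘ α = α

lemma key {n : ℕ} (ε ε' : Fin n → Fin n)
    (hc : IsContraction ε) (hm : Monotone ε ∨ Antitone ε)
    (hc' : IsContraction ε') (hm' : Monotone ε' ∨ Antitone ε')
    (hεid : ε ∘ ε = ε) (hε'id : ε' ∘ ε' = ε')
    (h1 : ε' ∘ ε = ε) (h2 : ε ∘ ε' = ε') (x : Fin n) : ¬ (ε x < ε' x) := by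
  intro hlt
  have fy : ε (ε x) = ε x := congrFun hεid x
  have fy' : ε (ε' x) = ε' x := congrFun h2 x
  have gy : ε' (ε x) = ε x := congrFun h1 x
  have gy' : ε' (ε' x) = ε' x := congrFun hε'id x
  rcases hm with hm | hm
  · rcases hm' with hm' | hm'
    · -- both monotone
      have hxy : ε x < x := by
        by_contra h
        push_neg at h
        have := hm' h
        rw [gy] at this
        exact absurd (lt_of_lt_of_le hlt this) (lt_irrefl _)
      have hxy' : x < ε' x := by
        by_contra h
        push_neg at h
        have := hm h
        rw [fy'] at this
        exact absurd (lt_of_le_of_lt this hlt) (lt_irrefl _)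
      have h := hc' x (ε x)
      rw [gy] at h
      rw [abs_sub_le_iff] at h
      obtain ⟨h, -⟩ := h
      have a1 : (ε x : ℤ) < (x : ℤ) := by exact_mod_cast hxy
      have a2 : (x : ℤ) < (ε' x : ℤ) := by exact_mod_cast hxy'
      rcases abs_cases ((x : ℤ) - (ε x : ℤ)) with ⟨he, -⟩ | ⟨he, -⟩ <;> omega
    · have := hm' (le_of_lt hlt)
      rw [gy, gy'] at this
      exact absurd (lt_of_lt_of_le hlt this) (lt_irrefl _)
  · have := hm (le_of_lt hlt)
    rw [fy, fy'] at this
    exact absurd (lt_of_lt_of_le hlt this) (lt_irrefl _)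

/-- `Reg(ORCT_n)` is `L`-unipotent: two `L`-related idempotents coincide.
`ε L ε'` means `ε = ε'` or `ε = uε'` and `ε' = vε` for some `u, v` in the
semigroup; the product `uε'` (apply `u` then `ε'`) is `ε' ∘ u` as functions. -/
theorem Reg_ORCT_L_unipotent {n : ℕ} (ε ε' : Fin n → Fin n)
    (hε : InRegORCT ε) (hεid : ε ∘ ε = ε)
    (hε' : InRegORCT ε') (hε'id : ε' ∘ ε' = ε')
    (hL : (ε = ε' ∨ ∃ u : Fin n → Fin n, InRegORCT u ∧ ε = ε' ∘ u) ∧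
          (ε' = ε ∨ ∃ v : Fin n → Fin n, InRegORCT v ∧ ε' = ε ∘ v)) :
    ε = ε' := by
  obtain ⟨⟨hc, hm⟩, -⟩ := hε
  obtain ⟨⟨hc', hm'⟩, -⟩ := hε'
  have h1 : ε' ∘ ε = ε := by
    rcases hL.1 with h | ⟨u, -, hu⟩
    · rw [h, hε'id]
    · rw [hu, ← Function.comp_assoc, hε'id]
  have h2 : ε ∘ ε' = ε' := by
    rcases hL.2 with h | ⟨v, -, hv⟩
    · rw [h, hεid]
    · rw [hv, ← Function.comp_assoc, hεid]
  funext x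
  have k1 := key ε ε' hc hm hc' hm' hεid hε'id h1 h2 x
  have k2 := key ε' ε hc' hm' hc hm hε'id hεid h2 h1 x
  exact le_antisymm (not_lt.mp k2) (not_lt.mp k1)
end

section
/- If two idempotent full contractions e, f of [n] are R-related in any containing semigroup (i.e., ef = f and fe = e), then ker e = ker f; combined with both being idempotent order-preserving contractions with the same kernel and same image size p ≥ 2 whose kernel classes are intervals with all middle classes singletons, it follows e = f. Hence each R-class of the Rees quotient Q_p(n) = K(n,p)/K(n,p−1), for p ≥ 2, contains a unique idempotent. -/
/-- Discrete crossing lemma (upward form): if `g c ≠ g y` with `y = c + d`,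
there are consecutive points `z, z+1` with `g z = g c` and `g (z+1) ≠ g c`. -/
lemma crossing_up {n : ℕ} (g : Fin n → Fin n) :
    ∀ d (c y : Fin n), (y : ℕ) = (c : ℕ) + d → g c ≠ g y →
      ∃ z w : Fin n, (w : ℕ) = (z : ℕ) + 1 ∧ g z = g c ∧ g w ≠ g c := by
  intro d
  induction d with
  | zero =>
    intro c y h hne
    exact absurd (congrArg g (Fin.ext h.symm)) hne
  | succ d ih =>
    intro c y h hne
    have hc1 : (c : ℕ) + 1 < n := by have := y.isLt; omega
    set c' : Fin n := ⟨(c : ℕ) + 1, hc1⟩ with hc'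
    by_cases hgc : g c' = g c
    · obtain ⟨z, w, h1, h2, h3⟩ := ih c' y (by simp [hc']; omega)
        (by rw [hgc]; exact hne)
      exact ⟨z, w, h1, by rw [h2, hgc], by rw [hgc] at h3; exact h3⟩
    · exact ⟨c, c', rfl, rfl, hgc⟩

/-- Discrete crossing lemma (downward form): if `g c ≠ g y` with `y = c + d`,
there are consecutive points `z, z+1` with `g z ≠ g y` and `g (z+1) = g y`. -/
lemma crossing_down {n : ℕ} (g : Fin n → Fin n) :
    ∀ d (c y : Fin n), (y : ℕ) = (c : ℕ) + d → g c ≠ g y →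
      ∃ z w : Fin n, (w : ℕ) = (z : ℕ) + 1 ∧ g z ≠ g y ∧ g w = g y := by
  intro d
  induction d with
  | zero =>
    intro c y h hne
    exact absurd (congrArg g (Fin.ext h.symm)) hne
  | succ d ih =>
    intro c y h hne
    have hz0 : (c : ℕ) + d < n := by have := y.isLt; omega
    set z0 : Fin n := ⟨(c : ℕ) + d, hz0⟩ with hz0'
    by_cases hg : g z0 = g y
    · obtain ⟨z, w, h1, h2, h3⟩ := ih c z0 (by simp [hz0'])
        (by rw [hg]; exact hne)
      exact ⟨z, w, h1, by rw [hg] at h2; exact h2, by rw [h3, hg]⟩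
    · exact ⟨z0, y, by simp [hz0']; omega, hg, rfl⟩

/-- Key lemma: under the hypotheses of the second part, `e x` cannot be
strictly smaller than `f x`. -/
lemma key_not_lt {n p : ℕ} (hp : 2 ≤ p) (e f : Fin n → Fin n)
    (hce : IsContraction e) (hcf : IsContraction f)
    (hme : Monotone e) (hmf : Monotone f)
    (hee : e ∘ e = e) (hff : f ∘ f = f)
    (hcard : Nat.card (Set.range e) = p)
    (hker : ∀ x y : Fin n, e x = e y ↔ f x = f y) (x : Fin n) :
    ¬ ((e x : ℕ) < (f x : ℕ)) := by
  intro hlt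
  have he_idem : ∀ z, e (e z) = e z := fun z => congrFun hee z
  have hf_idem : ∀ z, f (f z) = f z := fun z => congrFun hff z
  have hef : e (f x) = e x := (hker (f x) x).mpr (hf_idem x)
  have hfe : f (e x) = f x := (hker (e x) x).mp (he_idem x)
  have hintE : ∀ z : Fin n, (e x : ℕ) ≤ (z : ℕ) → (z : ℕ) ≤ (f x : ℕ) →
      e z = e x := by
    intro z h1 h2
    have l1 : e z ≤ e (f x) := hme (Fin.le_def.mpr h2)
    have l2 : e (e x) ≤ e z := hme (Fin.le_def.mpr h1)
    rw [hef] at l1; rw [he_idem] at l2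
    exact le_antisymm l1 l2
  have hintF : ∀ z : Fin n, (e x : ℕ) ≤ (z : ℕ) → (z : ℕ) ≤ (f x : ℕ) →
      f z = f x := by
    intro z h1 h2
    have l1 : f z ≤ f (f x) := hmf (Fin.le_def.mpr h2)
    have l2 : f (e x) ≤ f z := hmf (Fin.le_def.mpr h1)
    rw [hf_idem] at l1; rw [hfe] at l2
    exact le_antisymm l1 l2
  obtain ⟨y, hy⟩ : ∃ y, e y ≠ e x := by
    by_contra hcon
    push_neg at hcon
    have hrange : Set.range e = {e x} := by
      ext u
      constructor
      · rintro ⟨v, rfl⟩; exact hcon v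
      · rintro rfl; exact ⟨x, rfl⟩
    rw [hrange] at hcard
    simp at hcard
    omega
  rcases Nat.lt_trichotomy ((e y : ℕ)) ((e x : ℕ)) with h | h | h
  · -- e y < e x : use crossing_down on f between y and e x
    have hfy : f y ≠ f x := fun q => hy ((hker y x).mpr q)
    have hyx : (y : ℕ) < (e x : ℕ) := by
      by_contra hq
      push_neg at hq
      have := hme (Fin.le_def.mpr hq)
      rw [he_idem] at this
      exact absurd (Fin.le_def.mp this) (by omega)
    obtain ⟨z, w, hw, hz, hwe⟩ := crossing_down f ((e x : ℕ) - (y : ℕ)) y (e x)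
      (by omega) (by rw [hfe]; exact hfy)
    rw [hfe] at hz hwe
    have hmon : f z ≤ f w := hmf (Fin.le_def.mpr (by omega))
    have habs := hcf w z
    have hfw : (f w : ℕ) = (f x : ℕ) := congrArg Fin.val hwe
    have hfz : (f z : ℕ) = (f x : ℕ) - 1 := by
      have hmon' := Fin.le_def.mp hmon
      have hzne : (f z : ℕ) ≠ (f x : ℕ) := fun q => hz (Fin.ext (by omega))
      rcases abs_cases ((w:ℤ) - (z:ℤ)) with ⟨h1, _⟩ | ⟨h1, _⟩ <;>
        rcases abs_cases ((f w:ℤ) - (f z:ℤ)) with ⟨h2, _⟩ | ⟨h2, _⟩ <;>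
        · rw [h1, h2] at habs; omega
    have := hintF (f z) (by omega) (by omega)
    rw [hf_idem] at this
    exact hz this
  · exact hy (Fin.ext h)
  · -- e x < e y : use crossing_up on e between e x and y
    have hxy : (e x : ℕ) < (y : ℕ) := by
      by_contra hq
      push_neg at hq
      have := hme (Fin.le_def.mpr hq)
      rw [he_idem] at this
      exact absurd (Fin.le_def.mp this) (by omega)
    obtain ⟨z, w, hw, hz, hwne⟩ := crossing_up e ((y : ℕ) - (e x : ℕ)) (e x) y
      (by omega) (by rw [he_idem]; exact fun q => hy q.symm)
    rw [he_idem] at hz hwne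
    have hmon : e z ≤ e w := hme (Fin.le_def.mpr (by omega))
    have habs := hce w z
    have hez : (e z : ℕ) = (e x : ℕ) := congrArg Fin.val hz
    have hew : (e w : ℕ) = (e x : ℕ) + 1 := by
      have hmon' := Fin.le_def.mp hmon
      have hwne' : (e w : ℕ) ≠ (e x : ℕ) := fun q => hwne (Fin.ext (by omega))
      rcases abs_cases ((w:ℤ) - (z:ℤ)) with ⟨h1, _⟩ | ⟨h1, _⟩ <;>
        rcases abs_cases ((e w:ℤ) - (e z:ℤ)) with ⟨h2, _⟩ | ⟨h2, _⟩ <;>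
        · rw [h1, h2] at habs; omega
    have := hintE (e w) (by omega) (by omega)
    rw [he_idem] at this
    exact hwne this

/-- `R`-related idempotent full contractions (`ef = f` and `fe = e`, with the
product `ef` meaning apply `e` then `f`, i.e. `f ∘ e`) have equal kernels; and
two idempotent order-preserving full contractions with the same kernel and the
same image size `p ≥ 2` coincide.  Hence each `R`-class of the Rees quotient
`Q_p(n)` contains a unique idempotent. -/
theorem R_class_unique_idempotent {n : ℕ} :
    (∀ e f : Fin n → Fin n, IsContraction e → IsContraction f →
      e ∘ e = e → f ∘ f = f → f ∘ e = f → e ∘ f = e →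
      ∀ x y : Fin n, e x = e y ↔ f x = f y) ∧
    (∀ p : ℕ, 2 ≤ p → ∀ e f : Fin n → Fin n,
      IsContraction e → IsContraction f → Monotone e → Monotone f →
      e ∘ e = e → f ∘ f = f →
      Nat.card (Set.range e) = p → Nat.card (Set.range f) = p →
      (∀ x y : Fin n, e x = e y ↔ f x = f y) → e = f) := by
  constructor
  · intro e f _ _ _ _ hfe hef x y
    constructor
    · intro h
      calc f x = f (e x) := (congrFun hfe x).symm
        _ = f (e y) := by rw [h]
        _ = f y := congrFun hfe y
    · intro h
      calc e x = e (f x) := (congrFun hef x).symm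
        _ = e (f y) := by rw [h]
        _ = e y := congrFun hef y
  · intro p hp e f hce hcf hme hmf hee hff hcarde hcardf hker
    funext x
    have h1 := key_not_lt hp e f hce hcf hme hmf hee hff hcarde hker x
    have h2 := key_not_lt hp f e hcf hce hmf hme hff hee hcardf
      (fun a b => (hker a b).symm) x
    exact Fin.ext (by omega)
end
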